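/- Suppose ⊢ □(ψ ↔ (□ψ → φ)) for some formula ψ (a Löb sentence for φ) and ⊢ □(□φ → φ). Then ⊢ □φ. -/
import Mathlib


/-- Formulas of the monomodal language: propositional letters, ⊥, →, and □. -/
inductive Formula : Type
  | atom : Nat → Formula
  | falsum : Formula
  | imp : Formula → Formula → Formula
  | box : Formula → Formula

namespace Formula

/-- ¬φ := φ → ⊥ -/
def neg (φ : Formula) : Formula := imp φ falsum
/-- φ ∧ ψ := ¬(φ → ¬ψ) -/
def conj (φ ψ : Formula) : Formula := neg (imp φ (neg ψ))
/-- φ ∨ ψ := ¬φ → ψ -/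
def disj (φ ψ : Formula) : Formula := imp (neg φ) ψ
/-- φ ↔ ψ := (φ → ψ) ∧ (ψ → φ) -/
def biimp (φ ψ : Formula) : Formula := conj (imp φ ψ) (imp ψ φ)
/-- ◇φ := ¬□¬φ -/
def dia (φ : Formula) : Formula := neg (box (neg φ))

/-- φ is a propositional tautology: it is true under every assignment of
truth values to formulas that respects → and ⊥ (so atoms and boxed
formulas are treated as opaque propositional units). -/
def Taut (φ : Formula) : Prop :=
  ∀ v : Formula → Prop,
    (∀ ψ χ, v (imp ψ χ) ↔ (v ψ → v χ)) → ¬ v falsum → v φ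

end Formula

open Formula

/-- Derivability in the modal logic K4: all propositional tautologies,
scheme K, scheme 4, modus ponens, and necessitation. -/
inductive K4 : Formula → Prop
  | taut {φ} : Taut φ → K4 φ
  | axK (φ ψ) : K4 (imp (box (imp φ ψ)) (imp (box φ) (box ψ)))
  | ax4 (φ) : K4 (imp (box φ) (box (box φ)))
  | mp {φ ψ} : K4 (imp φ ψ) → K4 φ → K4 ψ
  | nec {φ} : K4 φ → K4 (box φ)


/-- K-distribution: from ⊢ □(a → b) and ⊢ □a infer ⊢ □b. -/
lemma K4.bmp {a b : Formula} (h : K4 (box (imp a b))) (ha : K4 (box a)) :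
    K4 (box b) := K4.mp (K4.mp (K4.axK a b) h) ha

lemma taut_biimp_left (a b : Formula) : Taut (imp (biimp a b) (imp a b)) := by
  intro v hv hf
  simp only [biimp, conj, neg, hv]
  tauto

lemma taut_biimp_right (a b : Formula) : Taut (imp (biimp a b) (imp b a)) := by
  intro v hv hf
  simp only [biimp, conj, neg, hv]
  tauto

lemma taut_chain (a b c d e : Formula) :
    Taut (imp (imp a b) (imp (imp b (imp c d)) (imp (imp a c) (imp (imp d e) (imp a e))))) := by
  intro v hv hf
  simp only [hv]
  tauto

/-- If ⊢ □(ψ ↔ (□ψ → φ)) (a Löb sentence for φ) and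
⊢ □(□φ → φ), then ⊢ □φ. -/
theorem lob_from_lob_sentence (φ ψ : Formula)
    (hLob : K4 (box (biimp ψ (imp (box ψ) φ))))
    (hAnte : K4 (box (imp (box φ) φ))) :
    K4 (box φ) := by
  set χ := imp (box ψ) φ with hχ
  -- boxed components of the biconditional
  have b1 : K4 (box (imp ψ χ)) :=
    K4.bmp (K4.nec (K4.taut (taut_biimp_left ψ χ))) hLob
  have b2 : K4 (box (imp χ ψ)) :=
    K4.bmp (K4.nec (K4.taut (taut_biimp_right ψ χ))) hLob
  -- inside the box: □(ψ → χ)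
  have u1 : K4 (box (box (imp ψ χ))) := K4.mp (K4.ax4 _) b1
  have u2 : K4 (box (imp (box (imp ψ χ)) (imp (box ψ) (box χ)))) :=
    K4.nec (K4.axK ψ χ)
  have u3 : K4 (box (imp (box ψ) (box χ))) := K4.bmp u2 u1
  have u4 : K4 (box (imp (box χ) (imp (box (box ψ)) (box φ)))) :=
    K4.nec (K4.axK (box ψ) φ)
  have u5 : K4 (box (imp (box ψ) (box (box ψ)))) := K4.nec (K4.ax4 ψ)
  have tchain : K4 (box (imp (imp (box ψ) (box χ))
      (imp (imp (box χ) (imp (box (box ψ)) (box φ)))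
        (imp (imp (box ψ) (box (box ψ)))
          (imp (imp (box φ) φ) (imp (box ψ) φ)))))) :=
    K4.nec (K4.taut (taut_chain _ _ _ _ _))
  -- s4 : ⊢ □(□ψ → φ)
  have s4 : K4 (box (imp (box ψ) φ)) :=
    K4.bmp (K4.bmp (K4.bmp (K4.bmp tchain u3) u4) u5) hAnte
  -- ⊢ □ψ
  have hψ : K4 (box ψ) := K4.bmp b2 s4
  -- conclude
  have h1 : K4 (imp (box (box ψ)) (box φ)) := K4.mp (K4.axK (box ψ) φ) s4
  exact K4.mp h1 (K4.mp (K4.ax4 ψ) hψ)
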